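/- arXiv:2011.06327 — 2 statements merged into one kernel-verified Lean document; each statement's English description precedes it below -/
import Mathlib

section
/- Online gradient descent with step sizes η_s = D/(G√s) satisfies the regret bound Σ_{s=1}^t g_s(x_s) − min_{x∈K} Σ_{s=1}^t g_s(x) ≤ (3/2) G D √t. -/
open scoped RealInnerProductSpace

variable {E : Type*} [NormedAddCommGroup E] [InnerProductSpace ℝ E] [CompleteSpace E]

/-- First-order condition for convex differentiable functions. -/
lemma aux_grad_ineq {K : Set E} {f : E → ℝ}
    (hf : ConvexOn ℝ K f) {a b : E} (ha : a ∈ K) (hb : b ∈ K)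
    (hd : DifferentiableAt ℝ f a) :
    f a - f b ≤ ⟪gradient f a, a - b⟫ := by
  set c : ℝ := ⟪gradient f a, b - a⟫ with hc
  have hF : HasFDerivAt f (InnerProductSpace.toDual ℝ E (gradient f a)) a :=
    hasGradientAt_iff_hasFDerivAt.mp hd.hasGradientAt
  have hL : HasDerivAt (fun θ : ℝ => a + θ • (b - a)) (b - a) 0 := by
    simpa using ((hasDerivAt_id (0:ℝ)).smul_const (b - a)).const_add a
  have hφ : HasDerivAt (fun θ : ℝ => f (a + θ • (b - a))) c 0 := by
    have hF' : HasFDerivAt f (InnerProductSpace.toDual ℝ E (gradient f a))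
        (a + (0:ℝ) • (b - a)) := by simpa using hF
    have := hF'.comp_hasDerivAt (x := 0) hL
    simpa [InnerProductSpace.toDual_apply_apply, hc, Function.comp_def] using this
  have htends : Filter.Tendsto (slope (fun θ : ℝ => f (a + θ • (b - a))) 0)
      (nhdsWithin 0 (Set.Ioi 0)) (nhds c) :=
    (hasDerivAt_iff_tendsto_slope.mp hφ).mono_left
      (nhdsWithin_mono 0 (fun θ hθ => ne_of_gt hθ))
  have hslope : ∀ᶠ θ in nhdsWithin (0:ℝ) (Set.Ioi 0),
      slope (fun θ : ℝ => f (a + θ • (b - a))) 0 θ ≤ f b - f a := by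
    filter_upwards [Ioo_mem_nhdsGT_of_mem (Set.left_mem_Ico.mpr one_pos)] with θ hθ
    obtain ⟨hθ0, hθ1⟩ := hθ
    have hcomb := hf.2 ha hb (by linarith : (0:ℝ) ≤ 1 - θ) hθ0.le (by ring)
    have heq : (1 - θ) • a + θ • b = a + θ • (b - a) := by module
    rw [heq, smul_eq_mul, smul_eq_mul] at hcomb
    rw [slope_def_field]
    simp only [zero_smul, add_zero, sub_zero]
    rw [div_le_iff₀ hθ0]
    nlinarith
  have hcle : c ≤ f b - f a := le_of_tendsto htends hslope
  have : ⟪gradient f a, a - b⟫ = -c := by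
    rw [hc, ← inner_neg_right]; congr 1; abel
  linarith [this ▸ (by linarith : f a - f b ≤ -c)]

/-- The pointwise-nearest-point map is distance-nonincreasing towards points of `K`. -/
lemma aux_proj {K : Set E} (hKconv : Convex ℝ K)
    {P : E → E} (hP : ∀ y, P y ∈ K ∧ ∀ z ∈ K, ‖y - P y‖ ≤ ‖y - z‖)
    (z : E) {w : E} (hw : w ∈ K) :
    ‖P z - w‖ ≤ ‖z - w‖ := by
  have hPz := (hP z).1
  have hmin : ‖z - P z‖ = ⨅ w : K, ‖z - w‖ := by
    haveI : Nonempty K := ⟨⟨P z, hPz⟩⟩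
    refine le_antisymm (le_ciInf fun w => (hP z).2 w w.2) ?_
    apply ciInf_le _ (⟨P z, hPz⟩ : K)
    refine ⟨0, fun r hr => ?_⟩
    obtain ⟨u, rfl⟩ := hr
    positivity
  have hvar : ⟪z - P z, w - P z⟫ ≤ 0 :=
    (norm_eq_iInf_iff_real_inner_le_zero hKconv hPz).mp hmin w hw
  have hexp : ‖z - w‖ ^ 2 = ‖z - P z‖ ^ 2 + 2 * ⟪z - P z, P z - w⟫ + ‖P z - w‖ ^ 2 := by
    have : z - w = (z - P z) + (P z - w) := by abel
    rw [this, norm_add_sq_real]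
  have hside : ⟪z - P z, P z - w⟫ = -⟪z - P z, w - P z⟫ := by
    rw [← inner_neg_right]; congr 1; abel
  have hsq : ‖P z - w‖ ^ 2 ≤ ‖z - w‖ ^ 2 := by
    rw [hexp, hside]; nlinarith [sq_nonneg ‖z - P z‖]
  have := Real.sqrt_le_sqrt hsq
  rwa [Real.sqrt_sq (norm_nonneg _), Real.sqrt_sq (norm_nonneg _)] at this

/-- Sum of `1/√s` bound. -/
lemma aux_sqrt_sum (n : ℕ) :
    ∑ s ∈ Finset.Icc 1 n, 1 / Real.sqrt s ≤ 2 * Real.sqrt n := by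
  induction n with
  | zero => simp
  | succ n ih =>
    rw [Finset.sum_Icc_succ_top (Nat.one_le_iff_ne_zero.mpr (Nat.succ_ne_zero n))]
    have hu : Real.sqrt n ^ 2 = n := Real.sq_sqrt (Nat.cast_nonneg n)
    have hv : Real.sqrt (n + 1 : ℕ) ^ 2 = (n : ℝ) + 1 := by
      rw [Real.sq_sqrt (by positivity)]; push_cast; ring
    have hvpos : 0 < Real.sqrt (n + 1 : ℕ) := Real.sqrt_pos.mpr (by positivity)
    have hkey : 1 / Real.sqrt (n + 1 : ℕ) ≤
        2 * Real.sqrt (n + 1 : ℕ) - 2 * Real.sqrt n := by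
      rw [div_le_iff₀ hvpos]
      nlinarith [sq_nonneg (Real.sqrt (n + 1 : ℕ) - Real.sqrt n), Real.sqrt_nonneg n, hvpos]
    linarith

set_option maxHeartbeats 1000000 in
/-- Online gradient descent with step sizes `η_s = D/(G√s)` over a convex
set `K` of diameter at most `D`, applied to convex differentiable cost functions with
gradients bounded by `G`, satisfies
`Σ_{s=1}^t g_s(x_s) − Σ_{s=1}^t g_s(y) ≤ (3/2) G D √t` for every `y ∈ K`. -/
theorem stmt2_ogd_regret
    (d t : ℕ) (K : Set (EuclideanSpace ℝ (Fin d)))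
    (hKne : K.Nonempty) (hKclosed : IsClosed K) (hKconv : Convex ℝ K)
    (D G : ℝ) (hD : 0 < D) (hG : 0 < G)
    (hdiam : ∀ x ∈ K, ∀ x' ∈ K, ‖x - x'‖ ≤ D)
    (g : ℕ → EuclideanSpace ℝ (Fin d) → ℝ)
    (hgconv : ∀ s, ConvexOn ℝ K (g s))
    (hgdiff : ∀ s x, DifferentiableAt ℝ (g s) x)
    (hgrad : ∀ s, ∀ x ∈ K, ‖gradient (g s) x‖ ≤ G)
    (P : EuclideanSpace ℝ (Fin d) → EuclideanSpace ℝ (Fin d))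
    (hP : ∀ y, P y ∈ K ∧ ∀ z ∈ K, ‖y - P y‖ ≤ ‖y - z‖)
    (x : ℕ → EuclideanSpace ℝ (Fin d))
    (hx1 : x 1 ∈ K)
    (hstep : ∀ s, 1 ≤ s → s ≤ t →
      x (s + 1) = P (x s - (D / (G * Real.sqrt s)) • gradient (g s) (x s))) :
    ∀ y ∈ K,
      ∑ s ∈ Finset.Icc 1 t, g s (x s) - ∑ s ∈ Finset.Icc 1 t, g s y ≤
        (3 / 2) * G * D * Real.sqrt t := by
  intro y hy
  rcases Nat.eq_zero_or_pos t with ht0 | htpos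
  · subst ht0; simp
  -- notation
  set η : ℕ → ℝ := fun s => D / (G * Real.sqrt s) with hηdef
  set a : ℕ → ℝ := fun s => ‖x s - y‖ ^ 2 with hadef
  have hηpos : ∀ s : ℕ, 1 ≤ s → 0 < η s := by
    intro s hs
    have : (0:ℝ) < Real.sqrt s := Real.sqrt_pos.mpr (by exact_mod_cast hs)
    exact div_pos hD (by positivity)
  have hηmono : ∀ s : ℕ, 1 ≤ s → η (s + 1) ≤ η s := by
    intro s hs
    have h1 : (0:ℝ) < Real.sqrt s := Real.sqrt_pos.mpr (by exact_mod_cast hs)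
    simp only [hηdef]
    gcongr
    push_cast
    linarith
  -- membership
  have mem : ∀ s, 1 ≤ s → s ≤ t + 1 → x s ∈ K := by
    intro s
    induction s with
    | zero => omega
    | succ n ih =>
      intro _ h2
      rcases Nat.eq_zero_or_pos n with h | h
      · subst h; exact hx1
      · rw [hstep n h (by omega)]; exact (hP _).1
  have haD : ∀ s, 1 ≤ s → s ≤ t + 1 → a s ≤ D ^ 2 := by
    intro s h1 h2
    exact pow_le_pow_left₀ (norm_nonneg _) (hdiam _ (mem s h1 h2) y hy) 2
  have hanonneg : ∀ s, 0 ≤ a s := fun s => sq_nonneg _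
  -- per-step inequality
  have key : ∀ s, 1 ≤ s → s ≤ t →
      g s (x s) - g s y ≤ (a s - a (s + 1)) / (2 * η s) + η s * G ^ 2 / 2 := by
    intro s h1 h2
    have hxs : x s ∈ K := mem s h1 (by omega)
    set v : EuclideanSpace ℝ (Fin d) := gradient (g s) (x s) with hv
    have hconv : g s (x s) - g s y ≤ ⟪v, x s - y⟫ :=
      aux_grad_ineq (hgconv s) hxs hy (hgdiff s (x s))
    have hηp := hηpos s h1
    have hvG : ‖v‖ ≤ G := hgrad s (x s) hxs
    -- projection + expansion
    have hproj : ‖x (s + 1) - y‖ ≤ ‖(x s - η s • v) - y‖ := by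
      rw [hstep s h1 h2]
      have := aux_proj hKconv hP (x s - η s • v) hy
      convert this using 3 <;> rw [hηdef]
    have hexp : ‖(x s - η s • v) - y‖ ^ 2
        = a s - 2 * η s * ⟪v, x s - y⟫ + η s ^ 2 * ‖v‖ ^ 2 := by
      have h0 : (x s - η s • v) - y = (x s - y) - η s • v := by abel
      rw [h0, norm_sub_sq_real, real_inner_smul_right, real_inner_comm,
        norm_smul, mul_pow]
      rw [hadef]
      simp [Real.norm_eq_abs, abs_of_pos hηp]
      ring
    have hsq : a (s + 1) ≤ a s - 2 * η s * ⟪v, x s - y⟫ + η s ^ 2 * ‖v‖ ^ 2 := by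
      rw [← hexp, hadef]
      exact pow_le_pow_left₀ (norm_nonneg _) hproj 2
    have hvG2 : ‖v‖ ^ 2 ≤ G ^ 2 := pow_le_pow_left₀ (norm_nonneg _) hvG 2
    have hinner : ⟪v, x s - y⟫ ≤ (a s - a (s + 1)) / (2 * η s) + η s * G ^ 2 / 2 := by
      rw [div_add_div _ _ (by positivity : (2 * η s) ≠ 0) (two_ne_zero), le_div_iff₀ (by positivity)]
      nlinarith
    linarith
  -- telescoping claim
  have claim : ∀ n, n ≤ t → 1 ≤ n →
      ∑ s ∈ Finset.Icc 1 n, (a s - a (s + 1)) / (2 * η s)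
        ≤ (D ^ 2 - a (n + 1)) / (2 * η n) := by
    intro n
    induction n with
    | zero => omega
    | succ n ih =>
      intro hle _
      rcases Nat.eq_zero_or_pos n with h | h
      · subst h
        rw [show Finset.Icc 1 1 = {1} from rfl, Finset.sum_singleton]
        gcongr
        exact haD 1 le_rfl (by omega)
      · have hstep1 := ih (by omega) h
        rw [Finset.sum_Icc_succ_top (by omega : 1 ≤ n + 1)]
        have hη1 := hηpos n h
        have hη2 := hηpos (n + 1) (by omega)
        have hmono := hηmono n h
        have hnum : (0:ℝ) ≤ D ^ 2 - a (n + 1) := by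
          linarith [haD (n + 1) (by omega) (by omega)]
        have h2 : (D ^ 2 - a (n + 1)) / (2 * η n)
            ≤ (D ^ 2 - a (n + 1)) / (2 * η (n + 1)) := by gcongr
        have h3 : (D ^ 2 - a (n + 1)) / (2 * η (n + 1))
            + (a (n + 1) - a (n + 1 + 1)) / (2 * η (n + 1))
            = (D ^ 2 - a (n + 1 + 1)) / (2 * η (n + 1)) := by
          rw [← add_div]; ring_nf
        linarith
  -- put it together
  have hsplit : ∑ s ∈ Finset.Icc 1 t, g s (x s) - ∑ s ∈ Finset.Icc 1 t, g s y
      = ∑ s ∈ Finset.Icc 1 t, (g s (x s) - g s y) := (Finset.sum_sub_distrib _ _).symm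
  have hsum1 : ∑ s ∈ Finset.Icc 1 t, (g s (x s) - g s y)
      ≤ ∑ s ∈ Finset.Icc 1 t, ((a s - a (s + 1)) / (2 * η s) + η s * G ^ 2 / 2) := by
    apply Finset.sum_le_sum
    intro s hs
    rw [Finset.mem_Icc] at hs
    exact key s hs.1 hs.2
  rw [Finset.sum_add_distrib] at hsum1
  have hsqt : (0:ℝ) < Real.sqrt t := Real.sqrt_pos.mpr (by exact_mod_cast htpos)
  -- first sum
  have hfirst : ∑ s ∈ Finset.Icc 1 t, (a s - a (s + 1)) / (2 * η s)
      ≤ G * D * Real.sqrt t / 2 := by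
    have h1 := claim t le_rfl htpos
    have h2 : (D ^ 2 - a (t + 1)) / (2 * η t) ≤ D ^ 2 / (2 * η t) := by
      gcongr
      linarith [hanonneg (t + 1)]
    have h3 : D ^ 2 / (2 * η t) = G * D * Real.sqrt t / 2 := by
      rw [hηdef]
      field_simp
    linarith
  -- second sum
  have hsecond : ∑ s ∈ Finset.Icc 1 t, η s * G ^ 2 / 2 ≤ G * D * Real.sqrt t := by
    have heq : ∀ s ∈ Finset.Icc 1 t, η s * G ^ 2 / 2 = (D * G / 2) * (1 / Real.sqrt s) := by
      intro s hs
      rw [Finset.mem_Icc] at hs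
      have h1 : (0:ℝ) < Real.sqrt s := Real.sqrt_pos.mpr (by exact_mod_cast hs.1)
      rw [hηdef]
      field_simp
    rw [Finset.sum_congr rfl heq, ← Finset.mul_sum]
    have := aux_sqrt_sum t
    calc (D * G / 2) * ∑ s ∈ Finset.Icc 1 t, 1 / Real.sqrt s
        ≤ (D * G / 2) * (2 * Real.sqrt t) := by gcongr
      _ = G * D * Real.sqrt t := by ring
  rw [hsplit]
  calc ∑ s ∈ Finset.Icc 1 t, (g s (x s) - g s y)
      ≤ G * D * Real.sqrt t / 2 + G * D * Real.sqrt t := by linarith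
    _ = (3 / 2) * G * D * Real.sqrt t := by ring
end

section
/- Quantitative LP stability: under the general position assumption, if x is feasible for the LP (i.e., x ∈ S ∩ Q) and its revenue gap from the optimum satisfies Σ_j r_j z*_j − Σ_j r_j x_j ≤ ε, then ‖x − z*‖ ≤ Δ·ε, where z* is the unique optimal solution and Δ > 0 is a constant independent of the capacity vector and bounds. -/
open Finset
open scoped RealInnerProductSpace

noncomputable section LPStabilityAux

abbrev Eu (n : ℕ) := EuclideanSpace ℝ (Fin n)

variable {n : ℕ} {κ : Type*} [Fintype κ] [DecidableEq κ]

lemma Eu_inner (x y : Eu n) : ⟪x, y⟫ = ∑ j, x j * y j := by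
  rw [PiLp.inner_apply]
  exact Finset.sum_congr rfl fun j _ => by simp [RCLike.inner_apply, mul_comm]

lemma Eu_sum_apply' {ι : Type*} (s : Finset ι) (f : ι → Eu n) (j : Fin n) :
    (∑ k ∈ s, f k) j = ∑ k ∈ s, f k j := by
  classical
  induction s using Finset.cons_induction with
  | empty => rfl
  | cons a s ha ih => rw [Finset.sum_cons, Finset.sum_cons, ← ih]; rfl

def combMap (g : κ → Eu n) (s : Finset κ) : ((↥s → ℝ)) →ₗ[ℝ] Eu n where
  toFun c := ∑ k : ↥s, c k • g k
  map_add' a b := by simp [add_smul, Finset.sum_add_distrib]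
  map_smul' t a := by simp [smul_smul, Finset.smul_sum]

lemma sum_subtype_of_support {M : Type*} [AddCommMonoid M] (s : Finset κ)
    (f : κ → M) (hf : ∀ k, k ∉ s → f k = 0) : ∑ k, f k = ∑ k : ↥s, f k := by
  classical
  rw [show (∑ k : ↥s, f ↑k) = ∑ k ∈ s, f k from Finset.sum_attach s f]
  exact (Finset.sum_subset (Finset.subset_univ s) (fun k _ hk => hf k hk)).symm


lemma carath (g : κ → Eu n) (c : κ → ℝ) (hc : ∀ k, 0 ≤ c k) :
    ∃ c' : κ → ℝ, (∀ k, 0 ≤ c' k) ∧ (∀ k, c' k ≠ 0 → c k ≠ 0) ∧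
      ∑ k, c' k • g k = ∑ k, c k • g k ∧
      ∀ α : κ → ℝ, (∀ k, α k ≠ 0 → c' k ≠ 0) → ∑ k, α k • g k = 0 → α = 0 := by
  classical
  suffices H : ∀ (M : ℕ) (c : κ → ℝ), (univ.filter fun k => c k ≠ 0).card ≤ M →
      (∀ k, 0 ≤ c k) → ∃ c' : κ → ℝ, (∀ k, 0 ≤ c' k) ∧ (∀ k, c' k ≠ 0 → c k ≠ 0) ∧
      ∑ k, c' k • g k = ∑ k, c k • g k ∧
      ∀ α : κ → ℝ, (∀ k, α k ≠ 0 → c' k ≠ 0) → ∑ k, α k • g k = 0 → α = 0 by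
    exact H _ c le_rfl hc
  intro M
  induction M with
  | zero =>
    intro c hcard hc
    refine ⟨c, hc, fun k hk => hk, rfl, fun α hα hsum => ?_⟩
    have hze : ∀ k, c k = 0 := by
      intro k
      by_contra hk
      have hmem : k ∈ univ.filter fun k => c k ≠ 0 := by simp [hk]
      have := Finset.card_pos.2 ⟨k, hmem⟩
      omega
    funext k
    by_contra hk
    exact (hα k hk) (hze k)
  | succ M ih =>
    intro c hcard hc
    by_cases hdep : ∃ α : κ → ℝ, (∀ k, α k ≠ 0 → c k ≠ 0) ∧ (∑ k, α k • g k = 0) ∧ α ≠ 0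
    · obtain ⟨α, hαsupp, hαsum, hαne⟩ := hdep
      have hwlog : ∃ β : κ → ℝ, (∀ k, β k ≠ 0 → c k ≠ 0) ∧ (∑ k, β k • g k = 0) ∧
          ∃ k, 0 < β k := by
        obtain ⟨k0, hk0⟩ := Function.ne_iff.1 hαne
        have hk0' : α k0 ≠ 0 := by simpa using hk0
        rcases lt_or_gt_of_ne hk0' with hneg | hpos
        · refine ⟨-α, fun k hk => hαsupp k (by simpa using hk), ?_, ⟨k0, by simpa using hneg⟩⟩
          have : ∑ k, (-α) k • g k = -∑ k, α k • g k := by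
            rw [← Finset.sum_neg_distrib]
            exact Finset.sum_congr rfl fun k _ => by simp [neg_smul]
          rw [this, hαsum, neg_zero]
        · exact ⟨α, hαsupp, hαsum, ⟨k0, hpos⟩⟩
      obtain ⟨β, hβsupp, hβsum, k1, hk1⟩ := hwlog
      set P : Finset κ := univ.filter fun k => 0 < β k with hP
      have hPne : P.Nonempty := ⟨k1, by simp [hP, hk1]⟩
      obtain ⟨k0, hk0P, hk0⟩ := Finset.exists_mem_eq_inf' hPne (fun k => c k / β k)
      set t : ℝ := P.inf' hPne (fun k => c k / β k) with ht
      have hk0pos : 0 < β k0 := by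
        have := hk0P; simp only [hP, Finset.mem_filter] at this; exact this.2
      have htle : ∀ k, 0 < β k → t ≤ c k / β k := by
        intro k hk
        exact Finset.inf'_le _ (by simp [hP, hk])
      have ht0 : 0 ≤ t := by
        rw [hk0]
        exact div_nonneg (hc k0) hk0pos.le
      set c'' : κ → ℝ := fun k => c k - t * β k with hc''
      have hc''nonneg : ∀ k, 0 ≤ c'' k := by
        intro k
        rcases lt_trichotomy (β k) 0 with h | h | h
        · have h2 : t * β k ≤ 0 := mul_nonpos_of_nonneg_of_nonpos ht0 h.le
          have := hc k; simp only [hc'']; linarith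
        · simp [hc'', h, hc k]
        · have h2 := (le_div_iff₀ h).mp (htle k h)
          simp only [hc'']; linarith
      have hc''supp : ∀ k, c'' k ≠ 0 → c k ≠ 0 := by
        intro k hk
        by_contra hck
        have hβk : β k = 0 := by
          by_contra hβk; exact (hβsupp k hβk) hck
        simp [hc'', hck, hβk] at hk
      have hc''k0 : c'' k0 = 0 := by
        simp only [hc'', hk0]
        field_simp
        ring
      have hsubset : (univ.filter fun k => c'' k ≠ 0) ⊆
          (univ.filter fun k => c k ≠ 0).erase k0 := by
        intro k hk
        simp only [Finset.mem_filter, Finset.mem_univ, true_and] at hk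
        refine Finset.mem_erase.2 ⟨?_, by simp [hc''supp k hk]⟩
        rintro rfl; exact hk hc''k0
      have hck0 : c k0 ≠ 0 := by
        have : β k0 ≠ 0 := hk0pos.ne'
        exact hβsupp k0 this
      have hcard'' : (univ.filter fun k => c'' k ≠ 0).card ≤ M := by
        have h1 := Finset.card_le_card hsubset
        have h2 : k0 ∈ univ.filter fun k => c k ≠ 0 := by simp [hck0]
        have h3 := Finset.card_erase_of_mem h2
        omega
      have hsum'' : ∑ k, c'' k • g k = ∑ k, c k • g k := by
        have : ∀ k, c'' k • g k = c k • g k - t • (β k • g k) := by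
          intro k; simp [hc'', sub_smul, smul_smul]
        rw [Finset.sum_congr rfl fun k _ => this k, Finset.sum_sub_distrib,
          ← Finset.smul_sum, hβsum, smul_zero, sub_zero]
      obtain ⟨c', h1, h2, h3, h4⟩ := ih c'' hcard'' hc''nonneg
      exact ⟨c', h1, fun k hk => hc''supp k (h2 k hk), h3.trans hsum'', h4⟩
    · push_neg at hdep
      exact ⟨c, hc, fun k hk => hk, rfl, hdep⟩


lemma isClosed_coneSet (g : κ → Eu n) :
    IsClosed {x : Eu n | ∃ c : κ → ℝ, (∀ k, 0 ≤ c k) ∧ x = ∑ k, c k • g k} := by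
  classical
  have key : {x : Eu n | ∃ c : κ → ℝ, (∀ k, 0 ≤ c k) ∧ x = ∑ k, c k • g k} =
      ⋃ s : Finset κ,
        (if Function.Injective (combMap g s) then
          (combMap g s) '' {c : ↥s → ℝ | ∀ k, 0 ≤ c k} else ∅) := by
    ext x
    simp only [Set.mem_iUnion, Set.mem_setOf_eq]
    constructor
    · rintro ⟨c, hc, rfl⟩
      obtain ⟨c', h1, _h2, h3, h4⟩ := carath g c hc
      set s : Finset κ := univ.filter fun k => c' k ≠ 0 with hs
      have hinj : Function.Injective (combMap g s) := by
        rw [← LinearMap.ker_eq_bot, LinearMap.ker_eq_bot']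
        intro β hβ
        set α : κ → ℝ := fun k => if h : k ∈ s then β ⟨k, h⟩ else 0 with hα
        have hαs : ∀ k, k ∉ s → α k • g k = 0 := by
          intro k hk; simp [hα, dif_neg hk]
        have hαsum : ∑ k, α k • g k = ∑ k : ↥s, β k • g k := by
          rw [sum_subtype_of_support s _ hαs]
          exact Finset.sum_congr rfl fun k _ => by simp [hα, dif_pos k.2]
        have hzero : ∑ k, α k • g k = 0 := by rw [hαsum]; exact hβ
        have hαsupp : ∀ k, α k ≠ 0 → c' k ≠ 0 := by
          intro k hk
          by_cases h : k ∈ s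
          · simpa [hs] using h
          · exact absurd (by simp [hα, dif_neg h]) hk
        have := h4 α hαsupp hzero
        funext k
        have : α ↑k = 0 := by rw [this]; rfl
        simpa [hα, dif_pos k.2] using this
      refine ⟨s, ?_⟩
      rw [if_pos hinj]
      refine ⟨fun k => c' ↑k, fun k => h1 ↑k, ?_⟩
      have heq : combMap g s (fun k => c' ↑k) = ∑ k : ↥s, c' ↑k • g ↑k := rfl
      show combMap g s (fun k => c' ↑k) = _
      rw [heq, ← sum_subtype_of_support s (fun k => c' k • g k) (fun k hk => by
        have : c' k = 0 := by by_contra h; exact hk (by simp [hs, h])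
        simp [this]), h3]
    · rintro ⟨s, hx⟩
      by_cases hinj : Function.Injective (combMap g s)
      · rw [if_pos hinj] at hx
        obtain ⟨β, hβ, rfl⟩ := hx
        refine ⟨fun k => if h : k ∈ s then β ⟨k, h⟩ else 0, fun k => ?_, ?_⟩
        · by_cases h : k ∈ s
          · simpa [h] using hβ ⟨k, h⟩
          · simp [h]
        · show combMap g s β = _
          rw [sum_subtype_of_support s _ (fun k hk => by simp [dif_neg hk])]
          exact (Finset.sum_congr rfl fun k _ => by simp [dif_pos k.2]).symm
      · rw [if_neg hinj] at hx
        exact absurd hx (Set.notMem_empty _)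
  rw [key]
  apply isClosed_iUnion_of_finite
  intro s
  split_ifs with hinj
  · have hker : LinearMap.ker (combMap g s) = ⊥ := LinearMap.ker_eq_bot.2 hinj
    have := (combMap g s).isClosedEmbedding_of_injective hker
    apply this.isClosedMap
    have : {c : ↥s → ℝ | ∀ k, 0 ≤ c k} = ⋂ k : ↥s, (fun c : ↥s → ℝ => c k) ⁻¹' Set.Ici 0 := by
      ext c; simp [Set.mem_iInter]
    rw [this]
    exact isClosed_iInter fun k => isClosed_Ici.preimage (continuous_apply k)
  · exact isClosed_empty




lemma exists_orth {m : ℕ} (W : Submodule ℝ (Fin m → ℝ)) (hW : W ≠ ⊤) :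
    ∃ q : Fin m → ℝ, q ≠ 0 ∧ ∀ w ∈ W, ∑ i, q i * w i = 0 := by
  classical
  set e : Eu m ≃ₗ[ℝ] (Fin m → ℝ) := WithLp.linearEquiv 2 ℝ (Fin m → ℝ) with he
  set W' : Submodule ℝ (Eu m) := W.comap (e : Eu m →ₗ[ℝ] (Fin m → ℝ)) with hW'
  have hW'top : W' ≠ ⊤ := by
    intro h
    apply hW
    rw [Submodule.eq_top_iff']
    intro x
    have : e.symm x ∈ W' := h ▸ Submodule.mem_top
    simpa [hW'] using this
  have horth : W'ᗮ ≠ ⊥ := by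
    intro h
    exact hW'top (Submodule.orthogonal_eq_bot_iff.1 h)
  obtain ⟨q, hqmem, hq0⟩ := Submodule.ne_bot_iff _ |>.1 horth
  refine ⟨e q, fun h => hq0 ?_, fun w hw => ?_⟩
  · apply e.injective
    simpa using h
  · have : ⟪q, e.symm w⟫ = 0 := by
      apply (Submodule.mem_orthogonal' W' q).1 hqmem
      simpa [hW'] using hw
    rw [Eu_inner] at this
    simpa [he, WithLp.coe_linearEquiv, WithLp.coe_symm_linearEquiv] using this


lemma farkas (g : κ → (Fin n → ℝ)) (r : Fin n → ℝ)
    (h : ∀ d : Fin n → ℝ, (∀ k, ∑ j, g k j * d j ≤ 0) → ∑ j, r j * d j ≤ 0) :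
    ∃ c : κ → ℝ, (∀ k, 0 ≤ c k) ∧ ∀ j, r j = ∑ k, c k * g k j := by
  classical
  set g' : κ → Eu n := fun k => (WithLp.equiv 2 _).symm (g k) with hg'
  set r' : Eu n := (WithLp.equiv 2 _).symm r with hr'
  set S : Set (Eu n) := {x : Eu n | ∃ c : κ → ℝ, (∀ k, 0 ≤ c k) ∧ x = ∑ k, c k • g' k}
    with hS
  have hmem : r' ∈ S → ∃ c : κ → ℝ, (∀ k, 0 ≤ c k) ∧ ∀ j, r j = ∑ k, c k * g k j := by
    rintro ⟨c, hcpos, hsum⟩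
    refine ⟨c, hcpos, fun j => ?_⟩
    have : r' j = (∑ k, c k • g' k) j := by rw [hsum]
    rw [Eu_sum_apply'] at this
    exact this
  by_cases hr : r' ∈ S
  · exact hmem hr
  · exfalso
    -- build the convex cone
    set K : ConvexCone ℝ (Eu n) :=
      { carrier := S
        smul_mem' := by
          rintro t ht x ⟨c, hcpos, rfl⟩
          exact ⟨fun k => t * c k, fun k => mul_nonneg ht.le (hcpos k), by
            rw [Finset.smul_sum]
            exact Finset.sum_congr rfl fun k _ => by rw [smul_smul]⟩
        add_mem' := by
          rintro x ⟨c, hcpos, rfl⟩ y ⟨c2, hc2pos, rfl⟩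
          exact ⟨fun k => c k + c2 k, fun k => add_nonneg (hcpos k) (hc2pos k), by
            rw [← Finset.sum_add_distrib]
            exact Finset.sum_congr rfl fun k _ => by rw [add_smul]⟩ } with hK
    have hne : (K : Set (Eu n)).Nonempty :=
      ⟨0, ⟨0, fun k => le_rfl, by simp⟩⟩
    have hcl : IsClosed (K : Set (Eu n)) := isClosed_coneSet g'
    obtain ⟨y, hy1, hy2⟩ : ∃ y : Eu n, (∀ x ∈ K, 0 ≤ ⟪x, y⟫) ∧ ⟪y, r'⟫ < 0 := by
      let C : ProperCone ℝ (Eu n) :=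
        { carrier := S
          add_mem' := fun ha hb => K.add_mem' ha hb
          zero_mem' := ⟨0, fun k => le_rfl, by simp⟩
          smul_mem' := by
            rintro ⟨t, ht⟩ x ⟨c, hcpos, rfl⟩
            refine ⟨fun k => t * c k, fun k => mul_nonneg ht (hcpos k), ?_⟩
            show t • ∑ k, c k • g' k = _
            rw [Finset.smul_sum]
            exact Finset.sum_congr rfl fun k _ => by rw [smul_smul]
          isClosed' := hcl }
      obtain ⟨y, h1, h2⟩ := C.hyperplane_separation' (x₀ := r') hr
      exact ⟨y, h1, by rw [real_inner_comm]; exact h2⟩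
    -- y gives a direction d with g k ⬝ d ≤ 0 for all k, but r ⬝ d > 0
    set d : Fin n → ℝ := fun j => -(y j) with hd
    have hgk : ∀ k, ∑ j, g k j * d j ≤ 0 := by
      intro k
      have hk : g' k ∈ K := ⟨Pi.single k 1, fun k' => by
        by_cases h : k' = k <;> simp [Pi.single_apply, h], by
          rw [Finset.sum_eq_single k]
          · simp
          · intro k' _ hk'; simp [Pi.single_apply, hk']
          · intro hk'; exact absurd (Finset.mem_univ k) hk'⟩
      have h1 := hy1 _ hk
      rw [Eu_inner] at h1
      have h2 : ∑ j, g k j * d j = -∑ j, g' k j * y j := by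
        rw [← Finset.sum_neg_distrib]
        exact Finset.sum_congr rfl fun j _ => by
          show g k j * (-(y j)) = -(g' k j * y j)
          have : g' k j = g k j := rfl
          rw [this]; ring
      rw [h2]
      linarith
    have h3 := h d hgk
    rw [Eu_inner] at hy2
    have h4 : ∑ j, r j * d j = -∑ j, y j * r' j := by
      rw [← Finset.sum_neg_distrib]
      exact Finset.sum_congr rfl fun j _ => by
        show r j * (-(y j)) = -(y j * r' j)
        have : r' j = r j := rfl
        rw [this]; ring
    rw [h4] at h3
    linarith




lemma inj_bound {n : ℕ} {κ : Type*} [Fintype κ] (f : κ → (Fin n → ℝ))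
    (hinj : ∀ w : Fin n → ℝ, (∀ k, ∑ j, f k j * w j = 0) → w = 0) :
    ∃ c : ℝ, 0 < c ∧ ∀ w : Fin n → ℝ,
      c * Real.sqrt (∑ j, w j ^ 2) ≤ ∑ k, |∑ j, f k j * w j| := by
  classical
  set f' : κ → Eu n := fun k => (WithLp.equiv 2 _).symm (f k) with hf'
  set G : Eu n → ℝ := fun w => ∑ k, |⟪f' k, w⟫| with hG
  have hGcont : Continuous G := by
    apply continuous_finset_sum
    intro k _
    exact (continuous_const.inner continuous_id).abs
  have hGnonneg : ∀ w, 0 ≤ G w := fun w => Finset.sum_nonneg fun k _ => abs_nonneg _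
  have hGpos : ∀ w : Eu n, w ≠ 0 → 0 < G w := by
    intro w hw
    rcases (hGnonneg w).lt_or_eq with h | h
    · exact h
    · exfalso
      apply hw
      have hzero : ∀ k, |⟪f' k, w⟫| = 0 := by
        intro k
        have := (Finset.sum_eq_zero_iff_of_nonneg (fun k _ => abs_nonneg _)).1 h.symm
        exact this k (Finset.mem_univ k)
      have : ∀ k, ∑ j, f k j * (w : Fin n → ℝ) j = 0 := by
        intro k
        have h2 := abs_eq_zero.1 (hzero k)
        rw [Eu_inner] at h2
        exact h2
      have := hinj _ this
      ext j
      exact congrFun this j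
  have hnorm : ∀ w : Eu n, ‖w‖ = Real.sqrt (∑ j, w j ^ 2) := by
    intro w
    rw [EuclideanSpace.norm_eq]
    congr 1
    exact Finset.sum_congr rfl fun j _ => by rw [Real.norm_eq_abs, sq_abs]
  by_cases hsn : (Metric.sphere (0 : Eu n) 1).Nonempty
  · obtain ⟨w0, hw0mem, hw0min⟩ :=
      (isCompact_sphere (0 : Eu n) 1).exists_isMinOn hsn hGcont.continuousOn
    have hw0 : w0 ≠ 0 := by
      intro h
      have := mem_sphere_zero_iff_norm.1 hw0mem
      rw [h, norm_zero] at this; norm_num at this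
    set c := G w0 with hc
    refine ⟨c, hGpos w0 hw0, fun w => ?_⟩
    set w' : Eu n := (WithLp.equiv 2 _).symm w with hw'
    by_cases hw : w' = 0
    · have : ∀ j, w j = 0 := fun j => congrArg (fun u : Eu n => u j) hw
      simp only [this]
      simp
    · have hwn : ‖w'‖ ≠ 0 := norm_ne_zero_iff.2 hw
      have hu : (‖w'‖⁻¹ • w') ∈ Metric.sphere (0 : Eu n) 1 := by
        rw [mem_sphere_zero_iff_norm, norm_smul, norm_inv, norm_norm]
        field_simp
      have hmin := hw0min hu
      have hGu : G (‖w'‖⁻¹ • w') = ‖w'‖⁻¹ * G w' := by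
        rw [hG]
        simp only
        rw [Finset.mul_sum]
        refine Finset.sum_congr rfl fun k _ => ?_
        rw [inner_smul_right, abs_mul, abs_inv, abs_norm]
      have h1 : c ≤ ‖w'‖⁻¹ * G w' := by
        have : G w0 ≤ G (‖w'‖⁻¹ • w') := hmin
        rw [hGu] at this
        exact this
      have h2 : c * ‖w'‖ ≤ G w' := by
        have hpos : 0 < ‖w'‖ := lt_of_le_of_ne (norm_nonneg _) (Ne.symm hwn)
        calc c * ‖w'‖ ≤ (‖w'‖⁻¹ * G w') * ‖w'‖ :=
              mul_le_mul_of_nonneg_right h1 hpos.le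
          _ = G w' := by field_simp
      have h3 : G w' = ∑ k, |∑ j, f k j * w j| := by
        rw [hG]
        exact Finset.sum_congr rfl fun k _ => by rw [Eu_inner]; rfl
      have h4 : ‖w'‖ = Real.sqrt (∑ j, w j ^ 2) := hnorm w'
      rw [← h3, ← h4]
      exact h2
  · -- sphere empty: n = 0 essentially, every w has zero coordinates? Not quite; but
    -- if the sphere is empty the space is trivial (no unit vectors means every vector is 0)
    refine ⟨1, one_pos, fun w => ?_⟩
    set w' : Eu n := (WithLp.equiv 2 _).symm w with hw'
    have hw : w' = 0 := by
      by_contra hw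
      have hwn : ‖w'‖ ≠ 0 := norm_ne_zero_iff.2 hw
      have hpos : 0 < ‖w'‖ := lt_of_le_of_ne (norm_nonneg _) (Ne.symm hwn)
      exact hsn ⟨‖w'‖⁻¹ • w', by
        rw [mem_sphere_zero_iff_norm, norm_smul, norm_inv, norm_norm]
        field_simp⟩
    have : ∀ j, w j = 0 := fun j => congrArg (fun u : Eu n => u j) hw
    simp only [this]
    simp


lemma gp2 {n m : ℕ} (r : Fin n → ℝ) (A : Fin m → Fin n → ℝ)
    (Abar : Fin m → (Fin n ⊕ Fin m) → ℝ)
    (hAbar : ∀ i l, Abar i l =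
      Sum.elim (fun j => A i j) (fun i' => if i = i' then (1 : ℝ) else 0) l)
    (rbar : (Fin n ⊕ Fin m) → ℝ) (hrbar : rbar = Sum.elim r 0)
    (hgenpos : ∀ p : Fin m → ℝ,
      (Finset.univ.filter
        (fun l : Fin n ⊕ Fin m => ∑ i, p i * Abar i l = rbar l)).card ≤ m)
    (p : Fin m → ℝ) (c : (Fin n ⊕ Fin m) → ℝ)
    (hsupp : ∀ l, c l ≠ 0 → ∑ i, p i * Abar i l = rbar l)
    (hcomb : ∀ i, ∑ l, c l * Abar i l = 0) : c = 0 := by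
  classical
  set T : (Fin m → ℝ) → Finset (Fin n ⊕ Fin m) := fun p =>
    Finset.univ.filter (fun l : Fin n ⊕ Fin m => ∑ i, p i * Abar i l = rbar l) with hT
  set col : (Fin n ⊕ Fin m) → (Fin m → ℝ) := fun l i => Abar i l with hcol
  have step : ∀ (p : Fin m → ℝ) (c : (Fin n ⊕ Fin m) → ℝ), c ≠ 0 →
      (∀ l, c l ≠ 0 → l ∈ T p) → (∀ i, ∑ l, c l * Abar i l = 0) →
      ∃ p' : Fin m → ℝ, (T p).card + 1 ≤ (T p').card ∧ ∀ l ∈ T p, l ∈ T p' := by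
    intro p c hc hsupp hcomb
    obtain ⟨l0, hl0⟩ := Function.ne_iff.1 hc
    have hl0' : c l0 ≠ 0 := by simpa using hl0
    have hl0T : l0 ∈ T p := hsupp l0 hl0'
    have hfull : ∑ l, c l • col l = 0 := by
      funext i
      rw [Finset.sum_apply]
      simp only [Pi.smul_apply, smul_eq_mul, hcol]
      exact hcomb i
    have hzero : ∑ l ∈ T p, c l • col l = 0 := by
      rw [Finset.sum_subset (Finset.subset_univ (T p)) (fun l _ hl => by
        have : c l = 0 := by by_contra h; exact hl (hsupp l h)
        simp [this])]
      exact hfull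
    set W : Submodule ℝ (Fin m → ℝ) :=
      Submodule.span ℝ (((T p).erase l0).image col : Set (Fin m → ℝ)) with hW
    have hmemW : ∀ l ∈ T p, col l ∈ W := by
      intro l hl
      by_cases h : l = l0
      · subst h
        have hsum : c l • col l + ∑ l' ∈ (T p).erase l, c l' • col l' = 0 :=
          (Finset.add_sum_erase (T p) (fun l' => c l' • col l') hl).trans hzero
        have h2 : c l • col l = -∑ l' ∈ (T p).erase l, c l' • col l' := by
          rw [eq_neg_iff_add_eq_zero]; exact hsum
        have h3 : col l = (c l)⁻¹ • (c l • col l) := (inv_smul_smul₀ hl0' _).symm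
        rw [h2, smul_neg, ← neg_smul] at h3
        rw [h3]
        refine Submodule.smul_mem _ _ (Submodule.sum_mem _ fun l' hl' => ?_)
        exact Submodule.smul_mem _ _ (Submodule.subset_span
          (Finset.mem_coe.2 (Finset.mem_image_of_mem col hl')))
      · exact Submodule.subset_span
          (Finset.mem_coe.2 (Finset.mem_image_of_mem col (Finset.mem_erase.2 ⟨h, hl⟩)))
    have hWne : W ≠ ⊤ := by
      intro hWtop
      have h1 : Module.finrank ℝ W ≤ (((T p).erase l0).image col).card :=
        finrank_span_finset_le_card (R := ℝ) (((T p).erase l0).image col)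
      rw [hWtop, finrank_top] at h1
      have h2 : Module.finrank ℝ (Fin m → ℝ) = m := Module.finrank_fin_fun ℝ
      have h3 : (((T p).erase l0).image col).card ≤ ((T p).erase l0).card :=
        Finset.card_image_le
      have h4 : ((T p).erase l0).card = (T p).card - 1 := Finset.card_erase_of_mem hl0T
      have h5 : (T p).card ≤ m := hgenpos p
      have h6 : 1 ≤ (T p).card := Finset.card_pos.2 ⟨l0, hl0T⟩
      omega
    obtain ⟨q, hq0, hqorth⟩ := exists_orth W hWne
    have hqcol : ∀ l ∈ T p, ∑ i, q i * Abar i l = 0 := fun l hl =>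
      hqorth (col l) (hmemW l hl)
    obtain ⟨i0, hi0⟩ := Function.ne_iff.1 hq0
    have hi0' : q i0 ≠ 0 := by simpa using hi0
    have hni0 : (Sum.inr i0 : Fin n ⊕ Fin m) ∉ T p := by
      intro hmem
      have := hqcol _ hmem
      rw [Finset.sum_eq_single i0 (fun i _ hi => by simp [hAbar i (Sum.inr i0), hi])
        (fun h => absurd (Finset.mem_univ i0) h)] at this
      simp [hAbar i0 (Sum.inr i0)] at this
      exact hi0' this
    have hpi0 : p i0 ≠ 0 := by
      intro hp
      apply hni0
      rw [hT]
      simp only [Finset.mem_filter, Finset.mem_univ, true_and]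
      rw [Finset.sum_eq_single i0 (fun i _ hi => by simp [hAbar i (Sum.inr i0), hi])
        (fun h => absurd (Finset.mem_univ i0) h)]
      simp [hAbar i0 (Sum.inr i0), hp, hrbar]
    set t : ℝ := -(p i0) / q i0 with htdef
    set p' : Fin m → ℝ := fun i => p i + t * q i with hp'
    have hTsub : ∀ l ∈ T p, l ∈ T p' := by
      intro l hl
      have hl1 : ∑ i, p i * Abar i l = rbar l := by
        rw [hT] at hl; simpa using hl
      rw [hT]
      simp only [Finset.mem_filter, Finset.mem_univ, true_and]
      have : ∀ i, p' i * Abar i l = p i * Abar i l + t * (q i * Abar i l) := by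
        intro i; rw [hp']; ring
      rw [Finset.sum_congr rfl fun i _ => this i, Finset.sum_add_distrib, hl1,
        ← Finset.mul_sum, hqcol l hl, mul_zero, add_zero]
    have hnew : (Sum.inr i0 : Fin n ⊕ Fin m) ∈ T p' := by
      rw [hT]
      simp only [Finset.mem_filter, Finset.mem_univ, true_and]
      rw [Finset.sum_eq_single i0 (fun i _ hi => by simp [hAbar i (Sum.inr i0), hi, hp'])
        (fun h => absurd (Finset.mem_univ i0) h)]
      rw [hAbar i0 (Sum.inr i0)]
      simp only [Sum.elim_inr, if_pos rfl, mul_one, hp', htdef, hrbar]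
      field_simp
      simp
    refine ⟨p', ?_, hTsub⟩
    have hsub : insert (Sum.inr i0 : Fin n ⊕ Fin m) (T p) ⊆ T p' := by
      intro l hl
      rcases Finset.mem_insert.1 hl with h | h
      · exact h ▸ hnew
      · exact hTsub l h
    have := Finset.card_le_card hsub
    rw [Finset.card_insert_of_notMem hni0] at this
    omega
  -- main induction
  suffices H : ∀ (M : ℕ) (p : Fin m → ℝ) (c : (Fin n ⊕ Fin m) → ℝ),
      m - (T p).card ≤ M →
      (∀ l, c l ≠ 0 → l ∈ T p) →
      (∀ i, ∑ l, c l * Abar i l = 0) → c = 0 by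
    refine H m p c (by omega) (fun l hl => ?_) hcomb
    rw [hT]; simp only [Finset.mem_filter, Finset.mem_univ, true_and]; exact hsupp l hl
  intro M
  induction M with
  | zero =>
    intro p c hM hsupp hcomb
    by_contra hc
    obtain ⟨p', hcard, _⟩ := step p c hc hsupp hcomb
    have h1 : (T p').card ≤ m := hgenpos p'
    omega
  | succ M ih =>
    intro p c hM hsupp hcomb
    by_contra hc
    obtain ⟨p', hcard, hsub⟩ := step p c hc hsupp hcomb
    have h1 : (T p').card ≤ m := hgenpos p'
    exact hc (ih p' c (by omega) (fun l hl => hsub l (hsupp l hl)) hcomb)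


end LPStabilityAux


set_option maxHeartbeats 2000000 in
/-- Quantitative LP stability: under the general position assumption,
there is a constant `Δ > 0` independent of the capacity vector `b` and the upper
bounds `v` such that whenever `z*` is an optimal solution of
`max{ Σ_j r_j z_j : Σ_j A_j z_j ≤ b, 0 ≤ z ≤ v }` and `x ∈ S ∩ Q` is feasible with
revenue gap `Σ_j r_j z*_j − Σ_j r_j x_j ≤ ε`, one has `‖x − z*‖ ≤ Δ·ε`. -/
theorem stmt11_lp_stability
    (n m : ℕ)
    (r : Fin n → ℝ) (A : Fin m → Fin n → ℝ)
    (Abar : Fin m → (Fin n ⊕ Fin m) → ℝ)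
    (hAbar : ∀ i l, Abar i l =
      Sum.elim (fun j => A i j) (fun i' => if i = i' then (1 : ℝ) else 0) l)
    (rbar : (Fin n ⊕ Fin m) → ℝ) (hrbar : rbar = Sum.elim r 0)
    (hgenpos : ∀ p : Fin m → ℝ,
      (Finset.univ.filter
        (fun l : Fin n ⊕ Fin m => ∑ i, p i * Abar i l = rbar l)).card ≤ m) :
    ∃ Δ : ℝ, 0 < Δ ∧
      ∀ (b : Fin m → ℝ) (v : Fin n → ℝ) (zstar x : Fin n → ℝ) (ε : ℝ),
        0 ≤ ε →
        -- `zstar` is feasible and optimal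
        (∀ i, ∑ j, A i j * zstar j ≤ b i) →
        (∀ j, 0 ≤ zstar j ∧ zstar j ≤ v j) →
        (∀ z : Fin n → ℝ, (∀ i, ∑ j, A i j * z j ≤ b i) →
          (∀ j, 0 ≤ z j ∧ z j ≤ v j) → ∑ j, r j * z j ≤ ∑ j, r j * zstar j) →
        -- `x ∈ S ∩ Q` is feasible
        (∀ i, ∑ j, A i j * x j ≤ b i) →
        (∀ j, 0 ≤ x j ∧ x j ≤ v j) →
        -- revenue gap at most ε
        ∑ j, r j * zstar j - ∑ j, r j * x j ≤ ε →
        Real.sqrt (∑ j, (x j - zstar j) ^ 2) ≤ Δ * ε := by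
  classical
  have key : ∀ T : Finset (Fin m) × Finset (Fin n) × Finset (Fin n),
      ∃ K : ℝ, 0 < K ∧
      ∀ (b : Fin m → ℝ) (v : Fin n → ℝ) (zstar x : Fin n → ℝ),
        (∀ i, ∑ j, A i j * zstar j ≤ b i) →
        (∀ j, 0 ≤ zstar j ∧ zstar j ≤ v j) →
        (∀ z : Fin n → ℝ, (∀ i, ∑ j, A i j * z j ≤ b i) →
          (∀ j, 0 ≤ z j ∧ z j ≤ v j) → ∑ j, r j * z j ≤ ∑ j, r j * zstar j) →
        (∀ i, ∑ j, A i j * x j ≤ b i) →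
        (∀ j, 0 ≤ x j ∧ x j ≤ v j) →
        (∀ i, i ∈ T.1 ↔ ∑ j, A i j * zstar j = b i) →
        (∀ j, j ∈ T.2.1 ↔ zstar j = 0) →
        (∀ j, j ∈ T.2.2 ↔ zstar j = v j) →
        Real.sqrt (∑ j, (x j - zstar j) ^ 2) ≤
          K * (∑ j, r j * zstar j - ∑ j, r j * x j) := by
    intro T
    obtain ⟨Ia, J0, Jv⟩ := T
    simp only
    -- the generators of the feasible-direction cone
    set g : (Fin m ⊕ Fin n ⊕ Fin n) → (Fin n → ℝ) :=
      Sum.elim (fun i => if i ∈ Ia then (fun j => A i j) else 0)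
        (Sum.elim
          (fun j0 => if j0 ∈ J0 then (fun j => if j = j0 then (-1 : ℝ) else 0) else 0)
          (fun j1 => if j1 ∈ Jv then (fun j => if j = j1 then (1 : ℝ) else 0) else 0))
      with hg
    by_cases hP : ∃ c : (Fin m ⊕ Fin n ⊕ Fin n) → ℝ,
        (∀ k, 0 ≤ c k) ∧ ∀ j, r j = ∑ k, c k * g k j
    · -- use the Farkas certificate
      obtain ⟨c, hc0, hcr⟩ := hP
      set p : Fin m → ℝ := fun i => if i ∈ Ia then c (Sum.inl i) else 0 with hp
      set lam : Fin n → ℝ := fun j => if j ∈ J0 then c (Sum.inr (Sum.inl j)) else 0 with hlam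
      set mu : Fin n → ℝ := fun j => if j ∈ Jv then c (Sum.inr (Sum.inr j)) else 0 with hmu
      have hp0 : ∀ i, 0 ≤ p i := fun i => by
        rw [hp]; dsimp only; split_ifs; exacts [hc0 _, le_rfl]
      have hlam0 : ∀ j, 0 ≤ lam j := fun j => by
        rw [hlam]; dsimp only; split_ifs; exacts [hc0 _, le_rfl]
      have hmu0 : ∀ j, 0 ≤ mu j := fun j => by
        rw [hmu]; dsimp only; split_ifs; exacts [hc0 _, le_rfl]
      -- the representation of r
      have hrid : ∀ j, r j = (∑ i, p i * A i j) - lam j + mu j := by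
        intro j
        have h0 := hcr j
        rw [Fintype.sum_sum_type, Fintype.sum_sum_type] at h0
        have e1 : ∑ i, c (Sum.inl i) * g (Sum.inl i) j = ∑ i, p i * A i j := by
          refine Finset.sum_congr rfl fun i _ => ?_
          rw [hg, hp]; dsimp only [Sum.elim_inl]
          by_cases h : i ∈ Ia
          · rw [if_pos h, if_pos h]
          · rw [if_neg h, if_neg h]; simp
        have e2 : ∑ j0, c (Sum.inr (Sum.inl j0)) * g (Sum.inr (Sum.inl j0)) j = -lam j := by
          rw [Finset.sum_eq_single j (fun j0 _ hj0 => by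
            rw [hg]; dsimp only [Sum.elim_inr, Sum.elim_inl]
            split_ifs with h
            · simp [Ne.symm hj0]
            · simp) (fun h => absurd (Finset.mem_univ j) h)]
          rw [hg, hlam]; dsimp only [Sum.elim_inr, Sum.elim_inl]
          split_ifs with h
          · simp
          · simp
        have e3 : ∑ j1, c (Sum.inr (Sum.inr j1)) * g (Sum.inr (Sum.inr j1)) j = mu j := by
          rw [Finset.sum_eq_single j (fun j1 _ hj1 => by
            rw [hg]; dsimp only [Sum.elim_inr]
            split_ifs with h
            · simp [Ne.symm hj1]
            · simp) (fun h => absurd (Finset.mem_univ j) h)]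
          rw [hg, hmu]; dsimp only [Sum.elim_inr]
          split_ifs with h
          · simp
          · simp
        rw [e1, e2, e3] at h0
        linarith
      -- the injective family of functionals
      set f : (Fin m ⊕ Fin n) → (Fin n → ℝ) :=
        Sum.elim (fun i => if p i = 0 then 0 else (fun j => A i j))
          (fun j0 => if lam j0 = 0 ∧ mu j0 = 0 then 0
            else (fun j => if j = j0 then (1 : ℝ) else 0)) with hf
      have hinjf : ∀ w : Fin n → ℝ, (∀ k, ∑ j, f k j * w j = 0) → w = 0 := by
        intro w hw
        set ct : (Fin n ⊕ Fin m) → ℝ :=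
          Sum.elim (fun j => w j)
            (fun i => if p i = 0 then -(∑ j, A i j * w j) else 0) with hct
        have hwzero : ∀ j0, ¬(lam j0 = 0 ∧ mu j0 = 0) → w j0 = 0 := by
          intro j0 hj0
          have := hw (Sum.inr j0)
          rw [hf] at this; dsimp only [Sum.elim_inr] at this
          rw [if_neg hj0] at this
          rw [Finset.sum_eq_single j0 (fun j _ hj => by simp [hj])
            (fun h => absurd (Finset.mem_univ j0) h)] at this
          simpa using this
        have hsupp : ∀ l, ct l ≠ 0 → ∑ i, p i * Abar i l = rbar l := by
          intro l hl
          rcases l with j0 | i0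
          · have hwj : w j0 ≠ 0 := by rw [hct] at hl; simpa using hl
            have hlm : lam j0 = 0 ∧ mu j0 = 0 := by
              by_contra h; exact hwj (hwzero j0 h)
            have : ∑ i, p i * Abar i (Sum.inl j0) = ∑ i, p i * A i j0 :=
              Finset.sum_congr rfl fun i _ => by simp [hAbar]
            rw [this, hrbar]
            have := hrid j0
            rw [hlm.1, hlm.2] at this
            simp only [Sum.elim_inl]
            linarith
          · have hpi : p i0 = 0 := by
              rw [hct] at hl; dsimp only [Sum.elim_inr] at hl
              by_contra h; rw [if_neg h] at hl; exact hl rfl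
            rw [Finset.sum_eq_single i0 (fun i _ hi => by
              rw [hAbar]; simp [hi]) (fun h => absurd (Finset.mem_univ i0) h)]
            rw [hAbar, hrbar]
            simp [hpi]
        have hcomb : ∀ i, ∑ l, ct l * Abar i l = 0 := by
          intro i
          rw [Fintype.sum_sum_type]
          have e1 : ∑ j, ct (Sum.inl j) * Abar i (Sum.inl j) = ∑ j, A i j * w j := by
            refine Finset.sum_congr rfl fun j _ => ?_
            rw [hct, hAbar]; dsimp only [Sum.elim_inl]; ring
          have e2 : ∑ i', ct (Sum.inr i') * Abar i (Sum.inr i') = ct (Sum.inr i) := by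
            rw [Finset.sum_eq_single i (fun i' _ hi' => by
              rw [hAbar]; simp [Ne.symm hi']) (fun h => absurd (Finset.mem_univ i) h)]
            rw [hAbar]; simp
          rw [e1, e2]
          by_cases hpi : p i = 0
          · rw [hct]; dsimp only [Sum.elim_inr]; rw [if_pos hpi]; ring
          · have := hw (Sum.inl i)
            rw [hf] at this; dsimp only [Sum.elim_inl] at this
            rw [if_neg hpi] at this
            have h2 : ∑ j, A i j * w j = 0 := this
            rw [h2, hct]; dsimp only [Sum.elim_inr]; rw [if_neg hpi]; ring
        have := gp2 r A Abar hAbar rbar hrbar hgenpos p ct hsupp hcomb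
        funext j
        have h3 : ct (Sum.inl j) = 0 := by rw [this]; rfl
        simpa [hct] using h3
      obtain ⟨c0, hc0pos, hbound⟩ := inj_bound f hinjf
      set D : (Fin m ⊕ Fin n) → ℝ :=
        Sum.elim (fun i => if p i = 0 then 0 else (p i)⁻¹)
          (fun j0 => if lam j0 ≠ 0 then (lam j0)⁻¹
            else if mu j0 ≠ 0 then (mu j0)⁻¹ else 0) with hD
      have hD0 : ∀ k, 0 ≤ D k := by
        intro k
        rcases k with i | j0
        · rw [hD]; dsimp only [Sum.elim_inl]
          split_ifs with h
          · exact le_rfl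
          · exact inv_nonneg.2 (hp0 i)
        · rw [hD]; dsimp only [Sum.elim_inr]
          split_ifs with h1 h2
          · exact inv_nonneg.2 (hlam0 j0)
          · exact inv_nonneg.2 (hmu0 j0)
          · exact le_rfl
      have hDsum : 0 ≤ (∑ k, D k) / c0 :=
        div_nonneg (Finset.sum_nonneg fun k _ => hD0 k) hc0pos.le
      refine ⟨(∑ k, D k) / c0 + 1, by linarith, ?_⟩
      intro b v zstar x hfz hbz hopt hfx hbx hIa hJ0 hJv
      set w : Fin n → ℝ := fun j => x j - zstar j with hw
      set gap : ℝ := ∑ j, r j * zstar j - ∑ j, r j * x j with hgap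
      have hgap0 : 0 ≤ gap := by
        rw [hgap]
        have := hopt x hfx hbx
        linarith
      -- gap identity
      have hgapid : gap = (∑ i, p i * -(∑ j, A i j * w j)) +
          ((∑ j, lam j * w j) + (∑ j, mu j * -(w j))) := by
        have h1 : gap = -∑ j, r j * w j := by
          rw [hgap, ← Finset.sum_neg_distrib, ← Finset.sum_sub_distrib]
          refine Finset.sum_congr rfl fun j _ => ?_
          rw [hw]; ring
        rw [h1]
        have h2 : ∀ j, r j * w j = (∑ i, p i * (A i j * w j)) - lam j * w j + mu j * w j := by
          intro j
          have e : (∑ i, p i * A i j) * w j = ∑ i, p i * (A i j * w j) := by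
            rw [Finset.sum_mul]
            exact Finset.sum_congr rfl fun i _ => by ring
          rw [hrid j, add_mul, sub_mul, e]
        rw [Finset.sum_congr rfl fun j _ => h2 j]
        rw [Finset.sum_add_distrib, Finset.sum_sub_distrib, Finset.sum_comm]
        have h3 : ∀ i, ∑ j, p i * (A i j * w j) = -(p i * -(∑ j, A i j * w j)) := by
          intro i
          rw [← Finset.mul_sum]
          ring
        rw [Finset.sum_congr rfl fun i _ => h3 i, Finset.sum_neg_distrib]
        rw [Finset.sum_congr rfl (fun j _ => show mu j * w j = -(mu j * -(w j)) by ring),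
          Finset.sum_neg_distrib]
        ring
      -- nonnegativity of the three groups of terms
      have ht1 : ∀ i, 0 ≤ p i * -(∑ j, A i j * w j) := by
        intro i
        by_cases hpi : p i = 0
        · rw [hpi]; simp
        · have hiIa : i ∈ Ia := by
            by_contra h
            rw [hp] at hpi; dsimp only at hpi; rw [if_neg h] at hpi; exact hpi rfl
          have hact : ∑ j, A i j * zstar j = b i := (hIa i).1 hiIa
          have hAw : ∑ j, A i j * w j ≤ 0 := by
            have : ∑ j, A i j * w j = (∑ j, A i j * x j) - ∑ j, A i j * zstar j := by
              rw [← Finset.sum_sub_distrib]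
              refine Finset.sum_congr rfl fun j _ => ?_
              rw [hw]; ring
            rw [this, hact]
            have := hfx i
            linarith
          exact mul_nonneg (hp0 i) (by linarith)
      have ht2 : ∀ j, 0 ≤ lam j * w j := by
        intro j
        by_cases hj : lam j = 0
        · rw [hj]; simp
        · have hjJ0 : j ∈ J0 := by
            by_contra h
            rw [hlam] at hj; dsimp only at hj; rw [if_neg h] at hj; exact hj rfl
          have : zstar j = 0 := (hJ0 j).1 hjJ0
          have hxj := (hbx j).1
          have hwj : 0 ≤ w j := by rw [hw]; dsimp only; linarith
          exact mul_nonneg (hlam0 j) hwj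
      have ht3 : ∀ j, 0 ≤ mu j * -(w j) := by
        intro j
        by_cases hj : mu j = 0
        · rw [hj]; simp
        · have hjJv : j ∈ Jv := by
            by_contra h
            rw [hmu] at hj; dsimp only at hj; rw [if_neg h] at hj; exact hj rfl
          have : zstar j = v j := (hJv j).1 hjJv
          have hxj := (hbx j).2
          have hwj : w j ≤ 0 := by rw [hw]; dsimp only; linarith
          exact mul_nonneg (hmu0 j) (by linarith)
      -- single-term bounds
      have hS1 : ∀ i, p i * -(∑ j, A i j * w j) ≤ gap := by
        intro i
        rw [hgapid]
        have h1 : p i * -(∑ j, A i j * w j) ≤ ∑ i', p i' * -(∑ j, A i' j * w j) :=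
          Finset.single_le_sum (fun i' _ => ht1 i') (Finset.mem_univ i)
        have h2 : 0 ≤ ∑ j, lam j * w j := Finset.sum_nonneg fun j _ => ht2 j
        have h3 : 0 ≤ ∑ j, mu j * -(w j) := Finset.sum_nonneg fun j _ => ht3 j
        linarith
      have hS2 : ∀ j, lam j * w j ≤ gap := by
        intro j
        rw [hgapid]
        have h1 : lam j * w j ≤ ∑ j', lam j' * w j' :=
          Finset.single_le_sum (fun j' _ => ht2 j') (Finset.mem_univ j)
        have h2 : 0 ≤ ∑ i, p i * -(∑ j', A i j' * w j') := Finset.sum_nonneg fun i _ => ht1 i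
        have h3 : 0 ≤ ∑ j', mu j' * -(w j') := Finset.sum_nonneg fun j' _ => ht3 j'
        linarith
      have hS3 : ∀ j, mu j * -(w j) ≤ gap := by
        intro j
        rw [hgapid]
        have h1 : mu j * -(w j) ≤ ∑ j', mu j' * -(w j') :=
          Finset.single_le_sum (fun j' _ => ht3 j') (Finset.mem_univ j)
        have h2 : 0 ≤ ∑ i, p i * -(∑ j', A i j' * w j') := Finset.sum_nonneg fun i _ => ht1 i
        have h3 : 0 ≤ ∑ j', lam j' * w j' := Finset.sum_nonneg fun j' _ => ht2 j'
        linarith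
      -- per-functional bounds
      have hper : ∀ k, |∑ j, f k j * w j| ≤ D k * gap := by
        intro k
        rcases k with i | j0
        · rw [hf, hD]; dsimp only [Sum.elim_inl]
          by_cases hpi : p i = 0
          · rw [if_pos hpi, if_pos hpi]; simp
          · rw [if_neg hpi, if_neg hpi]
            have hppos : 0 < p i := lt_of_le_of_ne (hp0 i) (Ne.symm hpi)
            have hnp : ∑ j, A i j * w j ≤ 0 := by nlinarith [ht1 i]
            rw [abs_of_nonpos hnp, inv_mul_eq_div, le_div_iff₀ hppos]
            nlinarith [hS1 i]
        · rw [hf, hD]; dsimp only [Sum.elim_inr]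
          by_cases hl : lam j0 = 0 ∧ mu j0 = 0
          · rw [if_pos hl, if_neg (by simp [hl.1]), if_neg (by simp [hl.2])]
            simp
          · rw [if_neg hl]
            have hsum : ∑ j, (fun j => if j = j0 then (1 : ℝ) else 0) j * w j = w j0 := by
              rw [Finset.sum_eq_single j0 (fun j _ hj => by simp [hj])
                (fun h => absurd (Finset.mem_univ j0) h)]
              simp
            rw [hsum]
            by_cases hlj : lam j0 ≠ 0
            · rw [if_pos hlj]
              have hlpos : 0 < lam j0 := lt_of_le_of_ne (hlam0 j0) (Ne.symm hlj)
              have hjJ0 : j0 ∈ J0 := by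
                by_contra h
                rw [hlam] at hlj; dsimp only at hlj; rw [if_neg h] at hlj; exact hlj rfl
              have hz0 : zstar j0 = 0 := (hJ0 j0).1 hjJ0
              have hwj : 0 ≤ w j0 := by
                rw [hw]; dsimp only; have := (hbx j0).1; linarith
              rw [abs_of_nonneg hwj, inv_mul_eq_div, le_div_iff₀ hlpos]
              nlinarith [hS2 j0]
            · rw [if_neg hlj]
              have hmj : mu j0 ≠ 0 := by
                by_contra h
                push_neg at hlj
                exact hl ⟨hlj, h⟩
              rw [if_pos hmj]
              have hmpos : 0 < mu j0 := lt_of_le_of_ne (hmu0 j0) (Ne.symm hmj)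
              have hjJv : j0 ∈ Jv := by
                by_contra h
                rw [hmu] at hmj; dsimp only at hmj; rw [if_neg h] at hmj; exact hmj rfl
              have hzv : zstar j0 = v j0 := (hJv j0).1 hjJv
              have hwj : w j0 ≤ 0 := by
                rw [hw]; dsimp only; have := (hbx j0).2; linarith
              rw [abs_of_nonpos hwj, inv_mul_eq_div, le_div_iff₀ hmpos]
              nlinarith [hS3 j0]
      -- conclude
      have hchain : c0 * Real.sqrt (∑ j, w j ^ 2) ≤ (∑ k, D k) * gap := by
        calc c0 * Real.sqrt (∑ j, w j ^ 2) ≤ ∑ k, |∑ j, f k j * w j| := hbound w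
          _ ≤ ∑ k, D k * gap := Finset.sum_le_sum fun k _ => hper k
          _ = (∑ k, D k) * gap := by rw [← Finset.sum_mul]
      have hfin : Real.sqrt (∑ j, w j ^ 2) ≤ ((∑ k, D k) / c0) * gap := by
        rw [div_mul_eq_mul_div, le_div_iff₀ hc0pos]
        nlinarith [hchain]
      have hrw : (∑ j, (x j - zstar j) ^ 2) = ∑ j, w j ^ 2 :=
        Finset.sum_congr rfl fun j _ => by rw [hw]
      rw [hrw]
      have h4 : ((∑ k, D k) / c0) * gap ≤ ((∑ k, D k) / c0 + 1) * gap := by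
        nlinarith [hgap0, hDsum]
      linarith
    · -- no certificate: derive one from any instance, contradiction
      refine ⟨1, one_pos, ?_⟩
      intro b v zstar x hfz hbz hopt hfx hbx hIa hJ0 hJv
      exfalso
      apply hP
      apply farkas g r
      intro d hd
      -- cone conditions on d
      have hdIa : ∀ i ∈ Ia, ∑ j, A i j * d j ≤ 0 := by
        intro i hi
        have h := hd (Sum.inl i)
        rw [hg] at h; dsimp only [Sum.elim_inl] at h
        rw [if_pos hi] at h
        exact h
      have hdJ0 : ∀ j0 ∈ J0, 0 ≤ d j0 := by
        intro j0 hj0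
        have h := hd (Sum.inr (Sum.inl j0))
        rw [hg] at h; dsimp only [Sum.elim_inr, Sum.elim_inl] at h
        rw [if_pos hj0] at h
        rw [Finset.sum_eq_single j0 (fun j _ hj => by simp [hj])
          (fun hh => absurd (Finset.mem_univ j0) hh)] at h
        simp at h
        linarith
      have hdJv : ∀ j1 ∈ Jv, d j1 ≤ 0 := by
        intro j1 hj1
        have h := hd (Sum.inr (Sum.inr j1))
        rw [hg] at h; dsimp only [Sum.elim_inr] at h
        rw [if_pos hj1] at h
        rw [Finset.sum_eq_single j1 (fun j _ hj => by simp [hj])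
          (fun hh => absurd (Finset.mem_univ j1) hh)] at h
        simpa using h
      -- construct a positive step size
      set S1 : Finset ℝ := (univ.filter (fun i => i ∉ Ia)).image
        (fun i => (b i - ∑ j, A i j * zstar j) / (1 + |∑ j, A i j * d j|)) with hS1
      set S2 : Finset ℝ := (univ.filter (fun j => j ∉ J0)).image
        (fun j => zstar j / (1 + |d j|)) with hS2
      set S3 : Finset ℝ := (univ.filter (fun j => j ∉ Jv)).image
        (fun j => (v j - zstar j) / (1 + |d j|)) with hS3
      set S : Finset ℝ := insert 1 (S1 ∪ S2 ∪ S3) with hS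
      have hSne : S.Nonempty := ⟨1, by rw [hS]; exact Finset.mem_insert_self 1 _⟩
      have hSpos : ∀ y ∈ S, 0 < y := by
        intro y hy
        rw [hS] at hy
        rcases Finset.mem_insert.1 hy with h | h
        · rw [h]; norm_num
        · rcases Finset.mem_union.1 h with h' | h'
          · rcases Finset.mem_union.1 h' with h'' | h''
            · obtain ⟨i, hi, rfl⟩ := Finset.mem_image.1 h''
              have hiIa : i ∉ Ia := by
                simpa using (Finset.mem_filter.1 hi).2
              have hslack : ∑ j, A i j * zstar j < b i :=
                lt_of_le_of_ne (hfz i) (fun hh => hiIa ((hIa i).2 hh))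
              apply div_pos (by linarith) (by positivity)
            · obtain ⟨j, hj, rfl⟩ := Finset.mem_image.1 h''
              have hjJ0 : j ∉ J0 := by
                simpa using (Finset.mem_filter.1 hj).2
              have hslack : 0 < zstar j :=
                lt_of_le_of_ne (hbz j).1 (fun hh => hjJ0 ((hJ0 j).2 hh.symm))
              apply div_pos hslack (by positivity)
          · obtain ⟨j, hj, rfl⟩ := Finset.mem_image.1 h'
            have hjJv : j ∉ Jv := by
              simpa using (Finset.mem_filter.1 hj).2
            have hslack : zstar j < v j :=
              lt_of_le_of_ne (hbz j).2 (fun hh => hjJv ((hJv j).2 hh))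
            apply div_pos (by linarith) (by positivity)
      set t : ℝ := S.min' hSne with htdef
      have htpos : 0 < t := hSpos t (S.min'_mem hSne)
      -- feasibility of the perturbed point
      set z' : Fin n → ℝ := fun j => zstar j + t * d j with hz'
      have hexp : ∀ i, ∑ j, A i j * z' j =
          (∑ j, A i j * zstar j) + t * ∑ j, A i j * d j := by
        intro i
        rw [Finset.mul_sum, ← Finset.sum_add_distrib]
        refine Finset.sum_congr rfl fun j _ => ?_
        rw [hz']; ring
      have hfz' : ∀ i, ∑ j, A i j * z' j ≤ b i := by
        intro i
        rw [hexp i]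
        by_cases hi : i ∈ Ia
        · have hact : ∑ j, A i j * zstar j = b i := (hIa i).1 hi
          have := hdIa i hi
          nlinarith
        · have hmem : (b i - ∑ j, A i j * zstar j) / (1 + |∑ j, A i j * d j|) ∈ S := by
            rw [hS]
            refine Finset.mem_insert_of_mem (Finset.mem_union_left _
              (Finset.mem_union_left _ (Finset.mem_image_of_mem _ ?_)))
            simp [hi]
          have hle := S.min'_le _ hmem
          have hden : (0 : ℝ) < 1 + |∑ j, A i j * d j| := by positivity
          have h1 : t * (1 + |∑ j, A i j * d j|) ≤ b i - ∑ j, A i j * zstar j := by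
            rw [← le_div_iff₀ hden]
            exact le_trans (by rw [htdef]) hle
          have h2 : t * ∑ j, A i j * d j ≤ t * (1 + |∑ j, A i j * d j|) := by
            have := le_abs_self (∑ j, A i j * d j)
            nlinarith
          linarith
      have hbz' : ∀ j, 0 ≤ z' j ∧ z' j ≤ v j := by
        intro j
        constructor
        · rw [hz']; dsimp only
          by_cases hj : j ∈ J0
          · have h0 : zstar j = 0 := (hJ0 j).1 hj
            have := hdJ0 j hj
            nlinarith
          · have hmem : zstar j / (1 + |d j|) ∈ S := by
              rw [hS]
              refine Finset.mem_insert_of_mem (Finset.mem_union_left _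
                (Finset.mem_union_right _ (Finset.mem_image_of_mem _ ?_)))
              simp [hj]
            have hle := S.min'_le _ hmem
            have hden : (0 : ℝ) < 1 + |d j| := by positivity
            have h1 : t * (1 + |d j|) ≤ zstar j := by
              rw [← le_div_iff₀ hden]
              exact le_trans (by rw [htdef]) hle
            have h2 : -(t * d j) ≤ t * (1 + |d j|) := by
              have := neg_abs_le (d j)
              nlinarith
            linarith
        · rw [hz']; dsimp only
          by_cases hj : j ∈ Jv
          · have h0 : zstar j = v j := (hJv j).1 hj
            have := hdJv j hj
            nlinarith
          · have hmem : (v j - zstar j) / (1 + |d j|) ∈ S := by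
              rw [hS]
              exact Finset.mem_insert_of_mem (Finset.mem_union_right _
                (Finset.mem_image_of_mem _ (by simp [hj])))
            have hle := S.min'_le _ hmem
            have hden : (0 : ℝ) < 1 + |d j| := by positivity
            have h1 : t * (1 + |d j|) ≤ v j - zstar j := by
              rw [← le_div_iff₀ hden]
              exact le_trans (by rw [htdef]) hle
            have h2 : t * d j ≤ t * (1 + |d j|) := by
              have := le_abs_self (d j)
              nlinarith
            linarith
      have hopt' := hopt z' hfz' hbz'
      have hexp2 : ∑ j, r j * z' j = (∑ j, r j * zstar j) + t * ∑ j, r j * d j := by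
        rw [Finset.mul_sum, ← Finset.sum_add_distrib]
        refine Finset.sum_congr rfl fun j _ => ?_
        rw [hz']; ring
      rw [hexp2] at hopt'
      by_contra hpos
      push_neg at hpos
      have : 0 < t * ∑ j, r j * d j := mul_pos htpos hpos
      linarith
  -- assemble the finitely many constants
  choose K hKpos hKprop using key
  refine ⟨∑ T, K T, ?_, ?_⟩
  · have h1 : K (∅, ∅, ∅) ≤ ∑ T, K T :=
      Finset.single_le_sum (fun T _ => (hKpos T).le) (Finset.mem_univ _)
    linarith [hKpos (∅, ∅, ∅)]
  · intro b v zstar x ε hε hfz hbz hopt hfx hbx hgapε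
    set T : Finset (Fin m) × Finset (Fin n) × Finset (Fin n) :=
      (univ.filter (fun i => ∑ j, A i j * zstar j = b i),
       univ.filter (fun j => zstar j = 0),
       univ.filter (fun j => zstar j = v j)) with hT
    have h := hKprop T b v zstar x hfz hbz hopt hfx hbx
      (fun i => by rw [hT]; simp) (fun j => by rw [hT]; simp) (fun j => by rw [hT]; simp)
    have hKT : K T ≤ ∑ T', K T' :=
      Finset.single_le_sum (fun T' _ => (hKpos T').le) (Finset.mem_univ T)
    have hsumpos : 0 < ∑ T', K T' := by
      have h1 : K (∅, ∅, ∅) ≤ ∑ T', K T' :=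
        Finset.single_le_sum (fun T' _ => (hKpos T').le) (Finset.mem_univ _)
      linarith [hKpos (∅, ∅, ∅)]
    have hgap0 : 0 ≤ ∑ j, r j * zstar j - ∑ j, r j * x j := by
      have := hopt x hfx hbx; linarith
    calc Real.sqrt (∑ j, (x j - zstar j) ^ 2)
        ≤ K T * (∑ j, r j * zstar j - ∑ j, r j * x j) := h
      _ ≤ (∑ T', K T') * (∑ j, r j * zstar j - ∑ j, r j * x j) :=
          mul_le_mul_of_nonneg_right hKT hgap0
      _ ≤ (∑ T', K T') * ε := mul_le_mul_of_nonneg_left hgapε hsumpos.le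
end
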